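/- Let A be an effect, t ∈ (0,1], and P a rank-one projection on a Hilbert space H. Then A is coexistent with tP if and only if t ≤ Λ(A,P) + Λ(I-A,P), where Λ(B,P) = sup{λ ≥ 0 : λP ≤ B} is the strength function. -/

import Mathlib

noncomputable section

/-- An effect on a complex Hilbert space: a positive operator below the identity. -/
def IsEffect {H : Type*} [NormedAddCommGroup H] [InnerProductSpace ℂ H] [CompleteSpace H]
    (A : H →L[ℂ] H) : Prop :=
  A.IsPositive ∧ ((1 : H →L[ℂ] H) - A).IsPositive

/-- Effects `A`, `B` are coexistent: there are effects `M ≤ A`, `N ≤ I - A` with `M + N = B`. -/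
def Coexistent {H : Type*} [NormedAddCommGroup H] [InnerProductSpace ℂ H] [CompleteSpace H]
    (A B : H →L[ℂ] H) : Prop :=
  ∃ M N : H →L[ℂ] H, IsEffect M ∧ IsEffect N ∧
    (A - M).IsPositive ∧ (((1 : H →L[ℂ] H) - A) - N).IsPositive ∧ M + N = B

/-- A rank-one orthogonal projection. -/
def IsRankOneProjection {H : Type*} [NormedAddCommGroup H] [InnerProductSpace ℂ H]
    [CompleteSpace H] (P : H →L[ℂ] H) : Prop :=
  IsSelfAdjoint P ∧ P ∘L P = P ∧ Module.finrank ℂ (LinearMap.range (P : H →ₗ[ℂ] H)) = 1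

/-- The strength function `Λ(B,P) = sup {λ ≥ 0 : λP ≤ B}`. -/
def strength {H : Type*} [NormedAddCommGroup H] [InnerProductSpace ℂ H] [CompleteSpace H]
    (B P : H →L[ℂ] H) : ℝ :=
  sSup {l : ℝ | 0 ≤ l ∧ (B - (l : ℂ) • P).IsPositive}

abbrev E2 := EuclideanSpace ℂ (Fin 2)

open ContinuousLinearMap Complex

namespace EffectAux

variable {H : Type*} [NormedAddCommGroup H] [InnerProductSpace ℂ H] [CompleteSpace H]

local notation "⟪" x ", " y "⟫" => @inner ℂ _ _ x y

set_option linter.unusedSectionVars false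

lemma star_ofReal_smul (c : ℝ) (P : H →L[ℂ] H) (hP : IsSelfAdjoint P) :
    IsSelfAdjoint ((c : ℂ) • P) :=
  IsSelfAdjoint.smul (show star (c:ℂ) = c by rw [Complex.star_def, Complex.conj_ofReal]) hP

lemma re_sub_smul (B P : H →L[ℂ] H) (l : ℝ) (x : H) :
    Complex.re ⟪(B - (l : ℂ) • P) x, x⟫ =
      Complex.re ⟪B x, x⟫ - l * Complex.re ⟪P x, x⟫ := by
  simp only [sub_apply, smul_apply, inner_sub_left, inner_smul_left, map_sub,
    Complex.conj_ofReal]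
  simp [Complex.re_ofReal_mul]

lemma isPositive_ofReal_smul {P : H →L[ℂ] H} (hP : P.IsPositive) {c : ℝ} (hc : 0 ≤ c) :
    ((c : ℂ) • P).IsPositive := by
  refine isPositive_def'.mpr ⟨star_ofReal_smul c P hP.isSelfAdjoint, fun x => ?_⟩
  have h := hP.2 x
  simp only [reApplyInnerSelf] at h ⊢
  simp only [smul_apply, inner_smul_left, Complex.conj_ofReal, RCLike.re_to_complex] at h ⊢
  rw [Complex.re_ofReal_mul]
  exact mul_nonneg hc h

/-- If `M` is positive and `re ⟪M x, x⟫ = 0` then `M x = 0`. -/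
lemma apply_eq_zero_of_re_inner_eq_zero {M : H →L[ℂ] H} (hM : M.IsPositive) {x : H}
    (hx : Complex.re ⟪M x, x⟫ = 0) : M x = 0 := by
  have hsymm := (ContinuousLinearMap.isSelfAdjoint_iff_isSymmetric).mp hM.isSelfAdjoint
  have key : ∀ y : H, Complex.re ⟪M x, y⟫ = 0 := by
    intro y
    have h1 : ∀ s : ℝ, 0 ≤ Complex.re ⟪M y, y⟫ * (s * s) + (2 * Complex.re ⟪M x, y⟫) * s + 0 := by
      intro s
      have h := hM.2 (x + (s : ℂ) • y)
      simp only [reApplyInnerSelf, RCLike.re_to_complex, map_add, map_smul] at h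
      have hsym : Complex.re ⟪M y, x⟫ = Complex.re ⟪M x, y⟫ := by
        rw [← Complex.conj_re, inner_conj_symm x (M y)]
        congr 1
        exact (hsymm x y).symm
      simp only [inner_add_left, inner_add_right, inner_smul_left, inner_smul_right,
        Complex.conj_ofReal, mul_add, Complex.add_re, Complex.re_ofReal_mul] at h
      rw [hx, hsym] at h
      ring_nf at h ⊢
      linarith [h]
    have hd := discrim_le_zero h1
    rw [discrim] at hd
    nlinarith [hd]
  have h2 := key (M x)
  have : Complex.re ⟪M x, M x⟫ = ‖M x‖ ^ 2 := by
    rw [← RCLike.re_to_complex, inner_self_eq_norm_sq]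
  rw [this] at h2
  simpa using pow_eq_zero_iff (n := 2) (by norm_num) |>.mp h2

/-- A rank-one projection is given by a unit vector. -/
lemma exists_unit_vector {P : H →L[ℂ] H} (hP : IsRankOneProjection P) :
    ∃ e : H, ‖e‖ = 1 ∧ ∀ x : H, P x = ⟪e, x⟫ • e := by
  obtain ⟨hsa, hidem, hrank⟩ := hP
  have hsymm := (ContinuousLinearMap.isSelfAdjoint_iff_isSymmetric).mp hsa
  set R := LinearMap.range (P : H →ₗ[ℂ] H) with hR
  have hfix : ∀ v ∈ R, P v = v := by
    rintro v ⟨u, rfl⟩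
    have := congrArg (fun T => T u) hidem
    simpa using this
  have hne : ∃ v : H, v ∈ R ∧ v ≠ 0 := by
    by_contra hcon
    push_neg at hcon
    have : R = ⊥ := by
      rw [Submodule.eq_bot_iff]
      intro v hv
      by_contra hv0
      exact hv0 (by by_contra h'; exact h' (hcon v hv) |>.elim)
    rw [this] at hrank
    simp at hrank
  obtain ⟨v, hvR, hv0⟩ := hne
  set e : H := ‖v‖⁻¹ • v with he
  have heR : e ∈ R := Submodule.smul_of_tower_mem R _ hvR
  have hee : ‖e‖ = 1 := norm_smul_inv_norm hv0
  have he0 : e ≠ 0 := by intro h; rw [h] at hee; simp at hee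
  have hspan : ∀ w : H, w ∈ R → ∃ c : ℂ, c • e = w := by
    have := (finrank_eq_one_iff_of_nonzero' (⟨e, heR⟩ : R) (by simpa using he0)).mp hrank
    intro w hw
    obtain ⟨c, hc⟩ := this ⟨w, hw⟩
    exact ⟨c, congrArg Subtype.val hc⟩
  have hPe : P e = e := hfix e heR
  refine ⟨e, hee, fun x => ?_⟩
  obtain ⟨c, hc⟩ := hspan (P x) (LinearMap.mem_range_self _ x)
  have hone : ⟪e, e⟫ = 1 := by
    rw [inner_self_eq_norm_sq_to_K, hee]
    norm_num
  have hinner : ⟪e, P x⟫ = c := by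
    rw [← hc, inner_smul_right, hone, mul_one]
  have hPex : ⟪e, P x⟫ = ⟪e, x⟫ := by
    have h := hsymm e x
    simp only [ContinuousLinearMap.coe_coe] at h
    rw [← h, hPe]
  rw [← hc, ← hinner, hPex]


section Strength

variable {B P : H →L[ℂ] H} {e : H}

lemma re_inner_P_nonneg (hPx : ∀ x : H, P x = ⟪e, x⟫ • e) (x : H) :
    0 ≤ Complex.re ⟪P x, x⟫ := by
  rw [hPx x, inner_smul_left]
  have : (starRingEnd ℂ) ⟪e, x⟫ * ⟪e, x⟫ = (Complex.normSq ⟪e, x⟫ : ℂ) := by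
    rw [mul_comm, Complex.mul_conj]
  rw [this]
  simpa using Complex.normSq_nonneg ⟪e, x⟫

lemma isPositive_P (hsa : IsSelfAdjoint P) (hPx : ∀ x : H, P x = ⟪e, x⟫ • e) :
    P.IsPositive :=
  isPositive_def'.mpr ⟨hsa, fun x => by
    simpa only [ContinuousLinearMap.reApplyInnerSelf, RCLike.re_to_complex] using
      re_inner_P_nonneg hPx x⟩

lemma re_inner_Pe (hee : ‖e‖ = 1) (hPx : ∀ x : H, P x = ⟪e, x⟫ • e) :
    Complex.re ⟪P e, e⟫ = 1 := by
  have hone : ⟪e, e⟫ = (1 : ℂ) := by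
    rw [inner_self_eq_norm_sq_to_K, hee]; norm_num
  rw [hPx e, hone, one_smul, hone]
  norm_num

lemma strength_bddAbove (hee : ‖e‖ = 1) (hPx : ∀ x : H, P x = ⟪e, x⟫ • e) :
    BddAbove {l : ℝ | 0 ≤ l ∧ (B - (l : ℂ) • P).IsPositive} := by
  refine ⟨Complex.re ⟪B e, e⟫, fun l hl => ?_⟩
  have h := hl.2.2 e
  simp only [ContinuousLinearMap.reApplyInnerSelf, RCLike.re_to_complex] at h
  rw [re_sub_smul, re_inner_Pe hee hPx, mul_one] at h
  linarith

lemma zero_mem_strength (hB : B.IsPositive) :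
    (0:ℝ) ∈ {l : ℝ | 0 ≤ l ∧ (B - (l : ℂ) • P).IsPositive} :=
  ⟨le_refl _, by simpa using hB⟩

lemma le_strength (hee : ‖e‖ = 1) (hPx : ∀ x : H, P x = ⟪e, x⟫ • e)
    {l : ℝ} (hl0 : 0 ≤ l) (hl : (B - (l : ℂ) • P).IsPositive) : l ≤ strength B P :=
  le_csSup (strength_bddAbove hee hPx) ⟨hl0, hl⟩

lemma strength_nonneg (hB : B.IsPositive) (hee : ‖e‖ = 1)
    (hPx : ∀ x : H, P x = ⟪e, x⟫ • e) : 0 ≤ strength B P :=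
  le_csSup (strength_bddAbove hee hPx) (zero_mem_strength hB)

/-- The supremum in the definition of strength is attained. -/
lemma strength_isPositive (hB : B.IsPositive) (hsa : IsSelfAdjoint B)
    (hPsa : IsSelfAdjoint P) (hee : ‖e‖ = 1) (hPx : ∀ x : H, P x = ⟪e, x⟫ • e) :
    (B - ((strength B P : ℝ) : ℂ) • P).IsPositive := by
  constructor
  · exact (ContinuousLinearMap.isSelfAdjoint_iff_isSymmetric).mp (hsa.sub (star_ofReal_smul _ P hPsa))
  · intro x
    simp only [ContinuousLinearMap.reApplyInnerSelf, RCLike.re_to_complex]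
    rw [re_sub_smul]
    set c := Complex.re ⟪P x, x⟫ with hc
    have hc0 : 0 ≤ c := re_inner_P_nonneg hPx x
    have hBx : 0 ≤ Complex.re ⟪B x, x⟫ := by
      simpa only [ContinuousLinearMap.reApplyInnerSelf, RCLike.re_to_complex] using hB.2 x
    rcases eq_or_lt_of_le hc0 with hceq | hcpos
    · rw [← hceq, mul_zero, sub_zero]
      exact hBx
    · have hsup : strength B P ≤ Complex.re ⟪B x, x⟫ / c := by
        apply csSup_le ⟨0, zero_mem_strength hB⟩
        intro l hl
        have h := hl.2.2 x
        simp only [ContinuousLinearMap.reApplyInnerSelf, RCLike.re_to_complex] at h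
        rw [re_sub_smul] at h
        rw [le_div_iff₀ hcpos]
        linarith
      have := mul_le_mul_of_nonneg_right hsup (le_of_lt hcpos)
      rw [div_mul_cancel₀ _ (ne_of_gt hcpos)] at this
      linarith

end Strength


/-- A positive operator vanishing on the orthogonal complement of a unit vector `e`
is a multiple of the projection onto `e`. -/
lemma eq_smul_P {M P : H →L[ℂ] H} {e : H} (hMpos : M.IsPositive)
    (hone : ⟪e, e⟫ = 1) (hPx : ∀ x : H, P x = ⟪e, x⟫ • e)
    (horth : ∀ x : H, ⟪e, x⟫ = 0 → M x = 0) :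
    M = ((Complex.re ⟪M e, e⟫ : ℝ) : ℂ) • P := by
  have hsymm := (ContinuousLinearMap.isSelfAdjoint_iff_isSymmetric).mp hMpos.isSelfAdjoint
  have hMe : M e = ⟪e, M e⟫ • e := by
    set w := M e - ⟪e, M e⟫ • e with hw
    have hw0 : ⟪e, w⟫ = 0 := by
      rw [hw, inner_sub_right, inner_smul_right, hone, mul_one, sub_self]
    have hMw : M w = 0 := horth w hw0
    have h1 : ⟪w, M e⟫ = 0 := by
      have h := hsymm w e
      simp only [ContinuousLinearMap.coe_coe] at h
      rw [← h, hMw, inner_zero_left]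
    have hwe : ⟪w, e⟫ = 0 := by
      rw [← inner_conj_symm, hw0, map_zero]
    have hMew : M e = w + ⟪e, M e⟫ • e := by rw [hw]; abel
    rw [hMew, inner_add_right, inner_smul_right, hwe, mul_zero, add_zero] at h1
    have hww : w = 0 := inner_self_eq_zero.mp h1
    rw [hw] at hww
    exact (sub_eq_zero.mp hww)
  have hreal : ⟪e, M e⟫ = ((Complex.re ⟪M e, e⟫ : ℝ) : ℂ) := by
    have hsym : ⟪M e, e⟫ = ⟪e, M e⟫ := by
      have h := hsymm e e
      simpa only [ContinuousLinearMap.coe_coe] using h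
    have hconj : (starRingEnd ℂ) ⟪M e, e⟫ = ⟪M e, e⟫ := by
      rw [inner_conj_symm, hsym]
    rw [← hsym]
    exact (Complex.conj_eq_iff_re.mp hconj).symm
  ext x
  have hwx : ⟪e, x - ⟪e, x⟫ • e⟫ = 0 := by
    rw [inner_sub_right, inner_smul_right, hone, mul_one, sub_self]
  have hMw := horth _ hwx
  rw [map_sub, map_smul, sub_eq_zero] at hMw
  calc M x = ⟪e, x⟫ • M e := hMw
    _ = ⟪e, x⟫ • (((Complex.re ⟪M e, e⟫ : ℝ) : ℂ) • e) := by
        conv_lhs => rw [hMe, hreal]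
    _ = (((Complex.re ⟪M e, e⟫ : ℝ) : ℂ) • P) x := by
        rw [ContinuousLinearMap.smul_apply, hPx x, smul_comm]

end EffectAux

open EffectAux

theorem coexistent_rank_one_iff_strength {H : Type*} [NormedAddCommGroup H]
    [InnerProductSpace ℂ H] [CompleteSpace H] (A P : H →L[ℂ] H)
    (hA : IsEffect A) (hP : IsRankOneProjection P)
    (t : ℝ) (ht : t ∈ Set.Ioc (0 : ℝ) 1) :
    Coexistent A ((t : ℂ) • P) ↔
      t ≤ strength A P + strength ((1 : H →L[ℂ] H) - A) P := by
  obtain ⟨ht0, ht1⟩ := ht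
  obtain ⟨e, hee, hPx⟩ := exists_unit_vector hP
  have hone : (inner ℂ e e : ℂ) = 1 := by
    rw [inner_self_eq_norm_sq_to_K, hee]; norm_num
  have hPe : P e = e := by rw [hPx e, hone, one_smul]
  have hPsa : IsSelfAdjoint P := hP.1
  have hPpos : P.IsPositive := isPositive_P hPsa hPx
  have hApos := hA.1
  have hA'pos := hA.2
  have hΛ1 := strength_isPositive hApos hApos.isSelfAdjoint hPsa hee hPx
  have hΛ2 := strength_isPositive hA'pos hA'pos.isSelfAdjoint hPsa hee hPx
  have hΛ1n := strength_nonneg hApos hee hPx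
  have hΛ2n := strength_nonneg hA'pos hee hPx
  set Λ1 := strength A P with hL1
  set Λ2 := strength ((1 : H →L[ℂ] H) - A) P with hL2
  constructor
  · rintro ⟨M, N, hM, hN, hMA, hNA, hMN⟩
    have hMpos := hM.1
    have hNpos := hN.1
    have horth : ∀ x : H, (inner ℂ e x : ℂ) = 0 → M x = 0 ∧ N x = 0 := by
      intro x hx
      have hPx0 : P x = 0 := by rw [hPx x, hx, zero_smul]
      have hadd : M x + N x = 0 := by
        have h := congrArg (fun T : H →L[ℂ] H => T x) hMN
        simpa [hPx0] using h
      have hM0 : Complex.re (inner ℂ (M x) x : ℂ) + Complex.re (inner ℂ (N x) x : ℂ) = 0 := by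
        rw [← Complex.add_re, ← inner_add_left, hadd, inner_zero_left, Complex.zero_re]
      have hm := hMpos.2 x
      have hn := hNpos.2 x
      simp only [ContinuousLinearMap.reApplyInnerSelf, RCLike.re_to_complex] at hm hn
      constructor
      · exact apply_eq_zero_of_re_inner_eq_zero hMpos (by linarith)
      · exact apply_eq_zero_of_re_inner_eq_zero hNpos (by linarith)
    set μ := Complex.re (inner ℂ (M e) e : ℂ) with hμ
    set ν := Complex.re (inner ℂ (N e) e : ℂ) with hν
    have hMeq : M = ((μ : ℝ) : ℂ) • P :=
      eq_smul_P hMpos hone hPx (fun x hx => (horth x hx).1)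
    have hNeq : N = ((ν : ℝ) : ℂ) • P :=
      eq_smul_P hNpos hone hPx (fun x hx => (horth x hx).2)
    have hμ0 : 0 ≤ μ := by
      have := hMpos.2 e
      simpa only [ContinuousLinearMap.reApplyInnerSelf, RCLike.re_to_complex] using this
    have hν0 : 0 ≤ ν := by
      have := hNpos.2 e
      simpa only [ContinuousLinearMap.reApplyInnerSelf, RCLike.re_to_complex] using this
    have hμΛ : μ ≤ Λ1 := le_strength hee hPx hμ0 (by rw [← hMeq]; exact hMA)
    have hνΛ : ν ≤ Λ2 := le_strength hee hPx hν0 (by rw [← hNeq]; exact hNA)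
    have hsum : μ + ν = t := by
      have h := congrArg (fun T : H →L[ℂ] H => Complex.re (inner ℂ (T e) e : ℂ)) hMN
      simp only [ContinuousLinearMap.add_apply, ContinuousLinearMap.smul_apply, hPe,
        inner_add_left, inner_smul_left, Complex.add_re, Complex.conj_ofReal, hone] at h
      simpa [hμ, hν] using h
    linarith
  · intro hle
    set s := min t Λ1 with hs
    have hs0 : 0 ≤ s := le_min (le_of_lt ht0) hΛ1n
    have hsΛ : s ≤ Λ1 := min_le_right _ _
    have hst : s ≤ t := min_le_left _ _
    set r := t - s with hr
    have hr0 : 0 ≤ r := by simp [hr]; linarith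
    have hrΛ : r ≤ Λ2 := by
      rcases le_total t Λ1 with h | h
      · have : s = t := min_eq_left h
        rw [hr, this]; simpa using hΛ2n
      · have : s = Λ1 := min_eq_right h
        rw [hr, this]; linarith
    have key1 : (A - (s : ℂ) • P).IsPositive := by
      have h2 : (((Λ1 - s : ℝ) : ℂ) • P).IsPositive :=
        isPositive_ofReal_smul hPpos (by linarith)
      have h := hΛ1.add h2
      convert h using 1
      push_cast
      module
    have key2 : (((1 : H →L[ℂ] H) - A) - (r : ℂ) • P).IsPositive := by
      have h2 : (((Λ2 - r : ℝ) : ℂ) • P).IsPositive :=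
        isPositive_ofReal_smul hPpos (by linarith)
      have h := hΛ2.add h2
      convert h using 1
      push_cast
      module
    refine ⟨(s : ℂ) • P, (r : ℂ) • P, ?_, ?_, key1, key2, ?_⟩
    · refine ⟨isPositive_ofReal_smul hPpos hs0, ?_⟩
      have h := key1.add hA'pos
      convert h using 1
      module
    · refine ⟨isPositive_ofReal_smul hPpos hr0, ?_⟩
      have h := key2.add hApos
      convert h using 1
      module
    · have : ((s : ℂ)) + ((r : ℂ)) = (t : ℂ) := by
        push_cast [hr]; ring
      rw [← add_smul, this]
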